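/- arXiv:1506.06528 — 4 statements merged into one kernel-verified Lean document; each statement's English description precedes it below -/
import Mathlib

section
/- Let 𝔾 = (I,Δ) be a discrete quantum semigroup and 𝔪 a right invariant mean for 𝔾. Then for every f ∈ F_{b:1}(𝔾×𝔾), one has (𝔪 ⊗̃ id ⊗̃ id)((Δ ⊗̃ id)(f)) = 1 ⊗ [(𝔪 ⊗̃ id)(f)]; that is, for all β,γ ∈ I, [(𝔪 ⊗̃ id ⊗̃ id)((Δ ⊗̃ id)(f))](β,γ) = 1_{n(β)} ⊗ [(𝔪 ⊗̃ id)(f)](γ). -/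
open scoped Matrix.Norms.L2Operator Kronecker ComplexOrder

namespace DQSG

/-- The matrix algebra `M_k(ℂ)`. -/
abbrev Mat (k : ℕ) : Type := Matrix (Fin k) (Fin k) ℂ

/-- `M_k(ℂ) ⊗ M_l(ℂ)`, realized as matrices indexed by `Fin k × Fin l`. -/
abbrev Mat2 (k l : ℕ) : Type := Matrix (Fin k × Fin l) (Fin k × Fin l) ℂ

/-- `M_k(ℂ) ⊗ M_l(ℂ) ⊗ M_p(ℂ)`. -/
abbrev Mat3 (k l p : ℕ) : Type :=
  Matrix (Fin k × Fin l × Fin p) (Fin k × Fin l × Fin p) ℂ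

/-- The function algebra `F(I)` of an index system `(I, n)`. -/
abbrev FI {I : Type*} (n : I → ℕ) : Type _ := ∀ γ : I, Mat (n γ)

/-- The function algebra `F(I × J)`. -/
abbrev FI2 {I J : Type*} (n : I → ℕ) (m : J → ℕ) : Type _ :=
  ∀ (α : I) (β : J), Mat2 (n α) (m β)

/-- The function algebra `F(I × J × K)`. -/
abbrev FI3 {I J K : Type*} (n : I → ℕ) (m : J → ℕ) (p : K → ℕ) : Type _ :=
  ∀ (α : I) (β : J) (γ : K), Mat3 (n α) (m β) (p γ)

/-- The subspace `F_b(I)` of bounded functions in `F(I)` (w.r.t. the operator norm). -/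
noncomputable def Fb {I : Type*} (n : I → ℕ) : Submodule ℂ (FI n) where
  carrier := {f | ∃ C : ℝ, ∀ γ, ‖f γ‖ ≤ C}
  zero_mem' := ⟨0, fun γ => by simp⟩
  add_mem' := by
    rintro f g ⟨C, hC⟩ ⟨D, hD⟩
    exact ⟨C + D, fun γ => (norm_add_le _ _).trans (add_le_add (hC γ) (hD γ))⟩
  smul_mem' := by
    rintro c f ⟨C, hC⟩
    exact ⟨‖c‖ * C, fun γ => by
      rw [Pi.smul_apply, norm_smul]
      exact mul_le_mul_of_nonneg_left (hC γ) (norm_nonneg c)⟩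

/-- `F_{b:1}(I × J)`: functions bounded in the first variable, for each fixed
second variable. -/
def Fb1 {I J : Type*} {n : I → ℕ} {m : J → ℕ} (f : FI2 n m) : Prop :=
  ∀ β : J, ∃ C : ℝ, ∀ α : I, ‖f α β‖ ≤ C

/-- `F_{b:2}(I × J)`: functions bounded in the second variable, for each fixed
first variable. -/
def Fb2 {I J : Type*} {n : I → ℕ} {m : J → ℕ} (f : FI2 n m) : Prop :=
  ∀ α : I, ∃ C : ℝ, ∀ β : J, ‖f α β‖ ≤ C

/-- The slice `f_β^{ij} ∈ F(I)` of `f ∈ F(I × J)`,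
so that `f(α,β) = Σ_{i,j} f_β^{ij}(α) ⊗ e_β^{ij}`. -/
def slice2 {I J : Type*} {n : I → ℕ} {m : J → ℕ} (f : FI2 n m) (β : J)
    (i j : Fin (m β)) : FI n :=
  fun α => Matrix.of fun k l => f α β (k, i) (l, j)

/-- The slice `f_β^{ij} ∈ F(I)` of `f ∈ F(J × I)`,
so that `f(β,α) = Σ_{i,j} e_β^{ij} ⊗ f_β^{ij}(α)`. -/
def slice1 {I J : Type*} {n : I → ℕ} {m : J → ℕ} (f : FI2 m n) (β : J)
    (i j : Fin (m β)) : FI n :=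
  fun α => Matrix.of fun k l => f β α (i, k) (j, l)

/-- `T ⊗̃ id : F(I × J) → F(I' × J)` for a map `T : F(I) → F(I')`. -/
def tenR {I I' J : Type*} {n : I → ℕ} {n' : I' → ℕ} {m : J → ℕ}
    (T : FI n → FI n') (f : FI2 n m) : FI2 n' m :=
  fun α' β => Matrix.of fun u v => T (slice2 f β u.2 v.2) α' u.1 v.1

/-- `id ⊗̃ T : F(J × I) → F(J × I')` for a map `T : F(I) → F(I')`. -/
def tenL {I I' J : Type*} {n : I → ℕ} {n' : I' → ℕ} {m : J → ℕ}
    (T : FI n → FI n') (f : FI2 m n) : FI2 m n' :=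
  fun β α' => Matrix.of fun u v => T (slice1 f β u.1 v.1) α' u.2 v.2

/-- `T ⊗̃ id : F(I × J) → F(I₁ × I₂ × J)` for a map `T : F(I) → F(I₁ × I₂)`. -/
def tenR2 {I I₁ I₂ J : Type*} {n : I → ℕ} {n₁ : I₁ → ℕ} {n₂ : I₂ → ℕ} {m : J → ℕ}
    (T : FI n → FI2 n₁ n₂) (f : FI2 n m) : FI3 n₁ n₂ m :=
  fun β₁ β₂ γ => Matrix.of fun u v =>
    T (slice2 f γ u.2.2 v.2.2) β₁ β₂ (u.1, u.2.1) (v.1, v.2.1)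

/-- `id ⊗̃ T : F(J × I) → F(J × I₁ × I₂)` for a map `T : F(I) → F(I₁ × I₂)`. -/
def tenL2 {I I₁ I₂ J : Type*} {n : I → ℕ} {n₁ : I₁ → ℕ} {n₂ : I₂ → ℕ} {m : J → ℕ}
    (T : FI n → FI2 n₁ n₂) (f : FI2 m n) : FI3 m n₁ n₂ :=
  fun γ β₁ β₂ => Matrix.of fun u v =>
    T (slice1 f γ u.1 v.1) β₁ β₂ u.2 v.2

open scoped Classical in
/-- Apply a functional defined on `F_b(I)` to an arbitrary element of `F(I)`,
extended by `0` off `F_b(I)`. -/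
noncomputable def apF {I : Type*} {n : I → ℕ} (𝔪 : Fb n →ₗ[ℂ] ℂ) (g : FI n) : ℂ :=
  if h : g ∈ Fb n then 𝔪 ⟨g, h⟩ else 0

/-- `𝔪 ⊗̃ id : F(I × J) → F(J)` for a functional `𝔪` on `F_b(I)`. -/
noncomputable def fTenR {I J : Type*} {n : I → ℕ} {m : J → ℕ}
    (𝔪 : Fb n →ₗ[ℂ] ℂ) (f : FI2 n m) : FI m :=
  fun β => Matrix.of fun i j => apF 𝔪 (slice2 f β i j)

/-- `id ⊗̃ 𝔪 : F(J × I) → F(J)` for a functional `𝔪` on `F_b(I)`. -/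
noncomputable def fTenL {I J : Type*} {n : I → ℕ} {m : J → ℕ}
    (𝔪 : Fb n →ₗ[ℂ] ℂ) (f : FI2 m n) : FI m :=
  fun β => Matrix.of fun i j => apF 𝔪 (slice1 f β i j)

/-- `𝔪 ⊗̃ id ⊗̃ id : F(I × J × K) → F(J × K)` for a functional `𝔪` on `F_b(I)`. -/
noncomputable def fTenR3 {I J K : Type*} {n : I → ℕ} {m : J → ℕ} {p : K → ℕ}
    (𝔪 : Fb n →ₗ[ℂ] ℂ) (f : FI3 n m p) : FI2 m p :=
  fun β γ => Matrix.of fun u v =>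
    apF 𝔪 (fun α => Matrix.of fun k l => f α β γ (k, u) (l, v))

/-- A state on the C*-algebra `F_b(I)`: a positive linear functional with `𝔪(1) = 1`. -/
def IsState {I : Type*} {n : I → ℕ} (𝔪 : Fb n →ₗ[ℂ] ℂ) : Prop :=
  (∀ g : FI n, g ∈ Fb n → 0 ≤ apF 𝔪 (star g * g)) ∧ apF 𝔪 1 = 1

/-- A comultiplication on the index system `(I, n)`, i.e. the structure of a
discrete quantum semigroup. `D α β γ` is the *-homomorphism
`Δ^α_{β,γ} : M_{n(α)} → M_{n(β)} ⊗ M_{n(γ)}`. -/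
structure Comul {I : Type*} (n : I → ℕ) where
  /-- the family of *-homomorphisms `Δ^α_{β,γ}` -/
  D : ∀ α β γ : I, Mat (n α) → Mat2 (n β) (n γ)
  linear : ∀ α β γ, IsLinearMap ℂ (D α β γ)
  map_mul' : ∀ α β γ x y, D α β γ (x * y) = D α β γ x * D α β γ y
  map_star' : ∀ α β γ x, D α β γ (star x) = star (D α β γ x)
  /-- condition (i): `Δ^α_{β,γ}(1) Δ^{α'}_{β,γ}(1) = 0` for `α ≠ α'` -/
  orth : ∀ β γ α α' : I, α ≠ α' → D α β γ 1 * D α' β γ 1 = 0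
  /-- for fixed `β, γ` only finitely many `Δ^α_{β,γ}` are nonzero
  (a consequence of condition (i), included as data) -/
  finite : ∀ β γ : I, {α : I | D α β γ ≠ 0}.Finite
  /-- condition (ii): coassociativity
  `Σ_ω (Δ^ω_{α,β} ⊗ id) ∘ Δ^λ_{ω,γ} = Σ_ω (id ⊗ Δ^ω_{β,γ}) ∘ Δ^λ_{α,ω}`,
  written entrywise. -/
  coassoc : ∀ (lam α β γ : I) (x : Mat (n lam)) (p p' : Fin (n α))
      (q q' : Fin (n β)) (r r' : Fin (n γ)),
      ∑ᶠ ω : I, D ω α β (Matrix.of fun k l => D lam ω γ x (k, r) (l, r')) (p, q) (p', q')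
        = ∑ᶠ ω : I, D ω β γ (Matrix.of fun k l => D lam α ω x (p, k) (p', l)) (q, r) (q', r')

/-- The induced *-homomorphism `Δ : F(I) → F(I × I)`,
`[Δ(f)](β,γ) = Σ_α Δ^α_{β,γ}(f(α))`. -/
noncomputable def Comul.ind {I : Type*} {n : I → ℕ} (C : Comul n) (f : FI n) :
    FI2 n n :=
  fun β γ => ∑ᶠ α : I, C.D α β γ (f α)

/-- A right invariant mean for a discrete quantum semigroup: a state `𝔪` on
`F_b(𝔾)` with `(𝔪 ⊗̃ id)(Δ f) = 𝔪(f)·1` for all `f ∈ F_b(𝔾)`. -/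
def IsRIMean {I : Type*} {n : I → ℕ} (C : Comul n) (𝔪 : Fb n →ₗ[ℂ] ℂ) : Prop :=
  IsState 𝔪 ∧ ∀ f : FI n, f ∈ Fb n →
    fTenR 𝔪 (C.ind f) = fun γ => apF 𝔪 f • (1 : Mat (n γ))

/-- A left invariant mean for a discrete quantum semigroup: a state `𝔪` on
`F_b(𝔾)` with `(id ⊗̃ 𝔪)(Δ f) = 𝔪(f)·1` for all `f ∈ F_b(𝔾)`. -/
def IsLIMean {I : Type*} {n : I → ℕ} (C : Comul n) (𝔪 : Fb n →ₗ[ℂ] ℂ) : Prop :=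
  IsState 𝔪 ∧ ∀ f : FI n, f ∈ Fb n →
    fTenL 𝔪 (C.ind f) = fun γ => apF 𝔪 f • (1 : Mat (n γ))

/-- A *-homomorphism between function algebras: a linear, multiplicative,
star-preserving map. -/
def IsStarHom {I J : Type*} {n : I → ℕ} {m : J → ℕ} (T : FI n → FI m) : Prop :=
  IsLinearMap ℂ T ∧ (∀ f g, T (f * g) = T f * T g) ∧ ∀ f, T (star f) = star (T f)

open scoped Classical in
/-- Apply a map defined on `F_b(I)` to an arbitrary element of `F(I)`,
extended by `0` off `F_b(I)`. -/
noncomputable def apTb {I J : Type*} {n : I → ℕ} {m : J → ℕ}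
    (T : Fb n → FI m) (g : FI n) : FI m :=
  if h : g ∈ Fb n then T ⟨g, h⟩ else 0

/-- `T ⊗̃ id : F_{b:1}(I × J) → F(I' × J)` for a map `T` defined on `F_b(I)`. -/
noncomputable def tenRb {I I' J : Type*} {n : I → ℕ} {n' : I' → ℕ} {m : J → ℕ}
    (T : Fb n → FI n') (f : FI2 n m) : FI2 n' m :=
  fun α' β => Matrix.of fun u v => apTb T (slice2 f β u.2 v.2) α' u.1 v.1

open scoped Classical in
/-- The canonical embedding `I_α : M_{n(α)} → F(I)` as functions supported at `α`:
`emb α x` is the element of `F(I)` that is `x` at `α` and `0` elsewhere. -/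
noncomputable def emb {I : Type*} {n : I → ℕ} (α : I) (x : Mat (n α)) : FI n :=
  Function.update (0 : FI n) α x

/-- The canonical identification `ℂ = M_1(ℂ) → M_1(ℂ) ⊗ M_1(ℂ)` (the identity map). -/
def e11 : Mat 1 → Mat2 1 1 := fun x => Matrix.of fun u v => x u.1 v.1

/-- The C*-algebra `ℓ∞(G)` of bounded complex-valued functions on `G`,
as a subspace of all complex-valued functions. -/
noncomputable def Fbc (G : Type*) : Submodule ℂ (G → ℂ) where
  carrier := {f | ∃ C : ℝ, ∀ x, ‖f x‖ ≤ C}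
  zero_mem' := ⟨0, fun x => by simp⟩
  add_mem' := by
    rintro f g ⟨C, hC⟩ ⟨D, hD⟩
    exact ⟨C + D, fun x => (norm_add_le _ _).trans (add_le_add (hC x) (hD x))⟩
  smul_mem' := by
    rintro c f ⟨C, hC⟩
    exact ⟨‖c‖ * C, fun x => by
      rw [Pi.smul_apply, norm_smul]
      exact mul_le_mul_of_nonneg_left (hC x) (norm_nonneg c)⟩

open scoped Classical in
/-- Apply a functional defined on `ℓ∞(G)` to an arbitrary function,
extended by `0` off `ℓ∞(G)`. -/
noncomputable def apC {G : Type*} (m : Fbc G →ₗ[ℂ] ℂ) (g : G → ℂ) : ℂ :=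
  if h : g ∈ Fbc G then m ⟨g, h⟩ else 0

/-- A state on the C*-algebra `ℓ∞(G)`: a positive linear functional
taking the value `1` at the constant function `1`. -/
def IsCState {G : Type*} (m : Fbc G →ₗ[ℂ] ℂ) : Prop :=
  (∀ g : G → ℂ, g ∈ Fbc G → 0 ≤ apC m (star g * g)) ∧ apC m 1 = 1



noncomputable def sel (k p : ℕ) (r : Fin p) : Matrix (Fin k) (Fin k × Fin p) ℂ :=
  Matrix.of fun i ab => if ab = (i, r) then 1 else 0

lemma sel_mul_conjTranspose (k p : ℕ) (r : Fin p) :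
    sel k p r * (sel k p r).conjTranspose = 1 := by
  ext i j
  simp [sel, Matrix.mul_apply, Matrix.conjTranspose_apply, Prod.ext_iff,
    Matrix.one_apply, apply_ite (star : ℂ → ℂ), ite_and, Fintype.sum_prod_type]
  by_cases h : i = j <;> simp [h, eq_comm]

lemma norm_sel_le (k p : ℕ) (r : Fin p) : ‖sel k p r‖ ≤ 1 := by
  have h1 : ‖(1 : Mat k)‖ = ‖(1 : Mat k)‖ * ‖(1 : Mat k)‖ := by
    simpa using Matrix.l2_opNorm_conjTranspose_mul_self (1 : Mat k)
  have hone : ‖(1 : Mat k)‖ ≤ 1 := by nlinarith [norm_nonneg (1 : Mat k)]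
  have h2 : ‖sel k p r * (sel k p r).conjTranspose‖ = ‖sel k p r‖ * ‖sel k p r‖ := by
    have := Matrix.l2_opNorm_conjTranspose_mul_self (sel k p r).conjTranspose
    rwa [Matrix.conjTranspose_conjTranspose, Matrix.l2_opNorm_conjTranspose] at this
  rw [sel_mul_conjTranspose] at h2
  nlinarith [norm_nonneg (sel k p r)]

lemma compress_eq (k p : ℕ) (A : Mat2 k p) (r r' : Fin p) :
    (Matrix.of fun i j => A (i, r) (j, r') : Mat k)
      = sel k p r * A * (sel k p r').conjTranspose := by
  ext i j
  simp [sel, Matrix.mul_apply, Matrix.conjTranspose_apply, apply_ite (star : ℂ → ℂ)]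

lemma norm_compress_le (k p : ℕ) (A : Mat2 k p) (r r' : Fin p) :
    ‖(Matrix.of fun i j => A (i, r) (j, r') : Mat k)‖ ≤ ‖A‖ := by
  rw [compress_eq]
  calc ‖sel k p r * A * (sel k p r').conjTranspose‖
      ≤ ‖sel k p r * A‖ * ‖(sel k p r').conjTranspose‖ := Matrix.l2_opNorm_mul _ _
    _ ≤ ‖sel k p r‖ * ‖A‖ * ‖(sel k p r').conjTranspose‖ := by
        gcongr; exact Matrix.l2_opNorm_mul _ _
    _ ≤ 1 * ‖A‖ * 1 := by
        rw [Matrix.l2_opNorm_conjTranspose]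
        gcongr <;> [exact norm_sel_le _ _ _; exact norm_sel_le _ _ _]
    _ = ‖A‖ := by ring

lemma slice2_mem_Fb {I J : Type*} {n : I → ℕ} {m : J → ℕ} {f : FI2 n m}
    (hf : Fb1 f) (γ : J) (r r' : Fin (m γ)) : slice2 f γ r r' ∈ Fb n := by
  obtain ⟨Cb, hCb⟩ := hf γ
  exact ⟨Cb, fun α => le_trans (norm_compress_le _ _ (f α γ) r r') (hCb α)⟩

/-- **Lemma 6.** For a right invariant mean `𝔪` on a discrete quantum semigroup and
`f ∈ F_{b:1}(𝔾 × 𝔾)`: `(𝔪 ⊗̃ id ⊗̃ id)((Δ ⊗̃ id)(f)) = 1 ⊗ (𝔪 ⊗̃ id)(f)`. -/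
theorem stmt_2 {I : Type*} (n : I → ℕ) (hn : ∀ γ, 0 < n γ) (C : Comul n)
    (𝔪 : Fb n →ₗ[ℂ] ℂ) (h𝔪 : IsRIMean C 𝔪)
    (f : FI2 n n) (hf : Fb1 f) :
    ∀ β γ : I, fTenR3 𝔪 (tenR2 C.ind f) β γ
      = (1 : Mat (n β)) ⊗ₖ fTenR 𝔪 f γ := by
  intro β γ
  ext ⟨q, r⟩ ⟨q', r'⟩
  have key := h𝔪.2 (slice2 f γ r r') (slice2_mem_Fb hf γ r r')
  have hL : fTenR3 𝔪 (tenR2 C.ind f) β γ (q, r) (q', r')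
      = fTenR 𝔪 (C.ind (slice2 f γ r r')) β q q' := rfl
  rw [hL, key]
  have hR : ((1 : Mat (n β)) ⊗ₖ fTenR 𝔪 f γ) (q, r) (q', r')
      = (1 : Mat (n β)) q q' * apF 𝔪 (slice2 f γ r r') := rfl
  rw [hR]
  simp [Matrix.smul_apply, smul_eq_mul, mul_comm]

end DQSG
end

section
/- Let I, J, J' be index systems and T : F(I) → F(J) a *-homomorphism. If f ∈ F_{b:2}(I×J'), then (T ⊗̃ id)(f) ∈ F_{b:2}(J×J'). -/
open scoped Matrix.Norms.L2Operator Kronecker ComplexOrder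

namespace DQSG

section Helpers
open Matrix
variable {ι κ : Type*} [Fintype ι] [DecidableEq ι] [Fintype κ] [DecidableEq κ]

omit [DecidableEq ι] in
lemma star_equiv_dot_self (z : EuclideanSpace ℂ ι) :
    star (WithLp.equiv 2 (ι → ℂ) z) ⬝ᵥ (WithLp.equiv 2 (ι → ℂ) z) = ((‖z‖ : ℂ)) ^ 2 := by
  have h := inner_self_eq_norm_sq_to_K (𝕜 := ℂ) z
  rw [EuclideanSpace.inner_eq_star_dotProduct, dotProduct_comm] at h
  exact_mod_cast h

lemma psd_exists_sqrt (A : Matrix ι ι ℂ) (hA : A.PosSemidef) : ∃ X : Matrix ι ι ℂ, Xᴴ * X = A := by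
  open scoped MatrixOrder in
  obtain ⟨X, hX, -, hXA⟩ := sub_zero A ▸
    CFC.exists_sqrt_of_isSelfAdjoint_of_quasispectrumRestricts hA.isHermitian
      (QuasispectrumRestricts.nnreal_of_nonneg hA.nonneg)
  exact ⟨X, by rw [← star_eq_conjTranspose, hX.star_eq, hXA, sub_zero]⟩

lemma herm_sub_psd (M : Matrix ι ι ℂ) (hM : M.IsHermitian) (r : ℝ) (hr : ‖M‖ ≤ r) :
    (((r : ℂ) • 1 - M)).PosSemidef := by
  refine posSemidef_iff_dotProduct_mulVec.mpr ⟨?_, ?_⟩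
  · unfold IsHermitian
    rw [conjTranspose_sub, conjTranspose_smul, conjTranspose_one, hM, RCLike.star_def,
      Complex.conj_ofReal]
  · intro x
    set x' : EuclideanSpace ℂ ι := (WithLp.equiv 2 _).symm x with hx'
    have hq : star x ⬝ᵥ (M *ᵥ x) = inner ℂ x' (Matrix.toEuclideanLin M x') := by
      rw [EuclideanSpace.inner_eq_star_dotProduct, dotProduct_comm]
      rfl
    have hsymm : (Matrix.toEuclideanLin M).IsSymmetric :=
      Matrix.isHermitian_iff_isSymmetric.mp hM
    obtain ⟨q, hqdef⟩ : ∃ q : ℂ, inner ℂ x' (Matrix.toEuclideanLin M x') = q := ⟨_, rfl⟩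
    rw [hqdef] at hq
    have hqreal : (starRingEnd ℂ) q = q := by
      rw [← hqdef, inner_conj_symm, hsymm]
    have hqre : q = (q.re : ℂ) := ((Complex.conj_eq_iff_re).mp hqreal).symm
    have hxx : star x ⬝ᵥ x = ((‖x'‖ : ℂ)) ^ 2 := by
      exact star_equiv_dot_self x'
    have hbound : ‖q‖ ≤ r * ‖x'‖ ^ 2 := by
      rw [← hqdef]
      calc ‖(inner ℂ x' (Matrix.toEuclideanLin M x') : ℂ)‖
          ≤ ‖x'‖ * ‖Matrix.toEuclideanLin M (x')‖ := norm_inner_le_norm _ _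
        _ ≤ ‖x'‖ * (‖M‖ * ‖x'‖) := by
            refine mul_le_mul_of_nonneg_left ?_ (norm_nonneg _)
            have := M.l2_opNorm_mulVec x'
            exact le_trans (le_of_eq (by rfl)) this
        _ ≤ r * ‖x'‖ ^ 2 := by nlinarith [norm_nonneg x', norm_nonneg M,
            mul_le_mul_of_nonneg_right hr (norm_nonneg x')]
    have hre : q.re ≤ r * ‖x'‖ ^ 2 := le_trans (Complex.re_le_norm q) hbound
    have : star x ⬝ᵥ (((r : ℂ) • 1 - M) *ᵥ x) = ((r * ‖x'‖ ^ 2 - q.re : ℝ) : ℂ) := by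
      rw [sub_mulVec, dotProduct_sub, smul_mulVec, one_mulVec, dotProduct_smul,
        hxx, hq, smul_eq_mul]
      rw [hqre]
      push_cast
      simp
    rw [this]
    rw [Complex.zero_le_real]
    linarith

lemma norm_le_sqrt_of_psd (X : Matrix ι ι ℂ) (K : ℝ) (hK : 0 ≤ K)
    (h : (((K : ℂ) • 1 - Xᴴ * X)).PosSemidef) : ‖X‖ ≤ Real.sqrt K := by
  rw [l2_opNorm_def]
  refine ContinuousLinearMap.opNorm_le_bound _ (Real.sqrt_nonneg K) fun x => ?_
  have h2 := h.dotProduct_mulVec_nonneg ((WithLp.equiv 2 _) x)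
  set xv : ι → ℂ := (WithLp.equiv 2 _) x with hxv
  set y : EuclideanSpace ℂ ι := Matrix.toEuclideanLin X x with hy
  have hyv : (WithLp.equiv 2 _) y = X *ᵥ xv := by
    rfl
  have hquad : star xv ⬝ᵥ ((Xᴴ * X) *ᵥ xv) = ((‖y‖ : ℂ)) ^ 2 := by
    have : star xv ⬝ᵥ ((Xᴴ * X) *ᵥ xv) = star (X *ᵥ xv) ⬝ᵥ (X *ᵥ xv) := by
      rw [← mulVec_mulVec, dotProduct_mulVec, ← star_mulVec]
    rw [this, ← hyv]
    exact star_equiv_dot_self y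
  have hxx : star xv ⬝ᵥ xv = ((‖x‖ : ℂ)) ^ 2 := by
    exact star_equiv_dot_self x
  rw [sub_mulVec, dotProduct_sub, smul_mulVec, one_mulVec, dotProduct_smul,
    hquad, hxx, smul_eq_mul] at h2
  have hreal : (0 : ℝ) ≤ K * ‖x‖ ^ 2 - ‖y‖ ^ 2 := by
    have : ((K * ‖x‖ ^ 2 - ‖y‖ ^ 2 : ℝ) : ℂ) = (K : ℂ) * (‖x‖ : ℂ) ^ 2 - (‖y‖ : ℂ) ^ 2 := by
      push_cast; ring
    rw [← this] at h2
    exact Complex.zero_le_real.mp h2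
  have hnorm : ‖y‖ ≤ Real.sqrt K * ‖x‖ := by
    have hsq : ‖y‖ ^ 2 ≤ (Real.sqrt K * ‖x‖) ^ 2 := by
      rw [mul_pow, Real.sq_sqrt hK]; linarith
    have := Real.sqrt_le_sqrt hsq
    rwa [Real.sqrt_sq (norm_nonneg _), Real.sqrt_sq (by positivity)] at this
  exact hnorm

omit [DecidableEq ι] in
lemma kron_one_psd (P : Matrix ι ι ℂ) (hP : P.PosSemidef) :
    (Matrix.of fun (u v : ι × κ) =>
      if u.2 = v.2 then P u.1 v.1 else 0 : Matrix (ι × κ) (ι × κ) ℂ).PosSemidef := by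
  refine posSemidef_iff_dotProduct_mulVec.mpr ⟨Matrix.ext fun u v => ?_, fun x => ?_⟩
  · simp only [conjTranspose_apply, of_apply]
    rcases eq_or_ne u.2 v.2 with hc | hc
    · simp [hc, hP.1.apply]
    · simp [hc, Ne.symm hc]
  · have : star x ⬝ᵥ ((Matrix.of fun (u v : ι × κ) =>
        if u.2 = v.2 then P u.1 v.1 else 0 : Matrix (ι × κ) (ι × κ) ℂ) *ᵥ x)
        = ∑ j : κ, star (fun i => x (i, j)) ⬝ᵥ (P *ᵥ fun i => x (i, j)) := by
      simp only [dotProduct, mulVec, Finset.mul_sum, Fintype.sum_prod_type]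
      simp only [of_apply, Pi.star_apply, mul_ite, ite_mul, mul_zero, zero_mul,
        Finset.sum_ite_eq, Finset.mem_univ, if_true]
      rw [Finset.sum_comm]
    rw [this]
    exact Finset.sum_nonneg fun j _ => hP.dotProduct_mulVec_nonneg _

end Helpers

section Amp
open Matrix
variable {I J : Type*} {n : I → ℕ} {m : J → ℕ}

/-- The amplification `T ⊗ id_N` of `T`, for a fixed matrix size `N`. -/
def amp (T : FI n → FI m) (N : ℕ) (F : ∀ α : I, Mat2 (n α) N) (b : J) : Mat2 (m b) N :=
  Matrix.of fun u v => T (fun α => Matrix.of fun k l => F α (k, u.2) (l, v.2)) b u.1 v.1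

lemma tenR_eq_amp {J' : Type*} {m' : J' → ℕ} (T : FI n → FI m) (f : FI2 n m')
    (b : J) (c : J') : tenR T f b c = amp T (m' c) (fun α => f α c) b := rfl

lemma amp_add (T : FI n → FI m) (hT : IsLinearMap ℂ T) (N : ℕ)
    (F G : ∀ α : I, Mat2 (n α) N) (b : J) :
    amp T N (F + G) b = amp T N F b + amp T N G b := by
  ext u v
  have hs : (fun α => Matrix.of fun k l => (F + G) α (k, u.2) (l, v.2))
      = (fun α => Matrix.of fun k l => F α (k, u.2) (l, v.2))
        + (fun α => Matrix.of fun k l => G α (k, u.2) (l, v.2)) := by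
    funext α; ext k l; simp
  simp only [amp, of_apply]
  rw [hs, hT.map_add]
  simp

lemma amp_mul (T : FI n → FI m) (hT : IsStarHom T) (N : ℕ)
    (F G : ∀ α : I, Mat2 (n α) N) (b : J) :
    amp T N (F * G) b = amp T N F b * amp T N G b := by
  ext u v
  have hs : (fun α => Matrix.of fun k l => (F * G) α (k, u.2) (l, v.2))
      = ∑ w : Fin N, (fun α => Matrix.of fun k l => F α (k, u.2) (l, w))
          * (fun α => Matrix.of fun k l => G α (k, w) (l, v.2)) := by
    funext α
    rw [Finset.sum_apply]
    ext k l
    rw [Matrix.sum_apply]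
    simp only [Pi.mul_apply, Matrix.mul_apply, of_apply, Fintype.sum_prod_type]
    rw [Finset.sum_comm]
  simp only [amp, of_apply]
  rw [hs, show T = ⇑(IsLinearMap.mk' T hT.1) from rfl, map_sum]
  simp only [IsLinearMap.mk'_apply, hT.2.1]
  rw [Finset.sum_apply, Matrix.sum_apply]
  simp only [Pi.mul_apply, Matrix.mul_apply, Fintype.sum_prod_type, of_apply]
  exact Finset.sum_comm

lemma amp_star (T : FI n → FI m) (hT : IsStarHom T) (N : ℕ)
    (F : ∀ α : I, Mat2 (n α) N) (b : J) :
    amp T N (star F) b = (amp T N F b)ᴴ := by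
  ext u v
  have hs : (fun α => Matrix.of fun k l => (star F) α (k, u.2) (l, v.2))
      = star (fun α => Matrix.of fun k l => F α (k, v.2) (l, u.2)) := by
    funext α; ext k l
    simp [Matrix.star_apply, Pi.star_apply]
  simp only [amp, of_apply, conjTranspose_apply]
  rw [hs, hT.2.2]
  simp [Matrix.star_apply, Pi.star_apply]

end Amp

section Main
open Matrix
variable {I J J' : Type*} {n : I → ℕ} {m : J → ℕ} {m' : J' → ℕ}

theorem aux_main (T : FI n → FI m) (hT : IsStarHom T)
    (f : FI2 n m') (hf : Fb2 f) : Fb2 (tenR T f) := by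
  classical
  intro b
  -- uniform bounds in the second variable
  set C : I → ℝ := fun α => max (Classical.choose (hf α)) 0 with hC
  have hCb : ∀ α c, ‖f α c‖ ≤ C α := fun α c =>
    (Classical.choose_spec (hf α) c).trans (le_max_left _ _)
  have hCnn : ∀ α, 0 ≤ C α := fun α => le_max_right _ _
  -- the positive element h = s* s of F(I)
  set s : FI n := fun α => ((C α : ℂ)) • 1 with hs
  set W : Mat (m b) := T (star s * s) b with hW
  have hWpsd : W.PosSemidef := by
    rw [hW, hT.2.1, hT.2.2]
    show ((star (T s) * T s) b).PosSemidef
    rw [Pi.mul_apply, Pi.star_apply, star_eq_conjTranspose]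
    exact posSemidef_conjTranspose_mul_self _
  refine ⟨Real.sqrt ‖W‖, fun c => ?_⟩
  rw [tenR_eq_amp]
  set Fc : ∀ α : I, Mat2 (n α) (m' c) := fun α => f α c with hFc
  set G : ∀ α : I, Mat2 (n α) (m' c) := fun α => ((C α ^ 2 : ℝ) : ℂ) • 1 with hG
  have hpsd : ∀ α, (((C α ^ 2 : ℝ) : ℂ) • 1 - (Fc α)ᴴ * Fc α).PosSemidef := by
    intro α
    refine herm_sub_psd _ (posSemidef_conjTranspose_mul_self _).1 _ ?_
    rw [l2_opNorm_conjTranspose_mul_self]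
    calc ‖Fc α‖ * ‖Fc α‖ ≤ C α * C α :=
          mul_le_mul (hCb α c) (hCb α c) (norm_nonneg _) (hCnn α)
      _ = C α ^ 2 := (sq (C α)).symm
  set Z : ∀ α : I, Mat2 (n α) (m' c) := fun α => Classical.choose (psd_exists_sqrt _ (hpsd α)) with hZ
  have hZsum : star Z * Z + star Fc * Fc = G := by
    funext α
    show star (Z α) * Z α + star (Fc α) * Fc α = G α
    have h1 : star (Z α) * Z α = ((C α ^ 2 : ℝ) : ℂ) • 1 - (Fc α)ᴴ * Fc α := by
      rw [star_eq_conjTranspose, Classical.choose_spec (psd_exists_sqrt _ (hpsd α))]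
    rw [h1, star_eq_conjTranspose, hG]
    exact sub_add_cancel _ _
  have hampG : amp T (m' c) G b
      = Matrix.of fun u v => if u.2 = v.2 then W u.1 v.1 else 0 := by
    ext u v
    simp only [amp, of_apply]
    rcases eq_or_ne u.2 v.2 with hc2 | hc2
    · rw [if_pos hc2]
      have hkey : (fun α => Matrix.of fun k l => G α (k, u.2) (l, v.2)) = star s * s := by
        funext α; ext k l
        simp only [hG, of_apply, Matrix.smul_apply, Matrix.one_apply, Prod.mk.injEq,
          Pi.mul_apply, Pi.star_apply, hs, star_smul, Matrix.smul_mul, Matrix.mul_smul,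
          Matrix.one_mul, smul_eq_mul, RCLike.star_def, Complex.conj_ofReal, hc2]
        rcases eq_or_ne k l with hkl | hkl
        · simp [hkl, Matrix.one_apply]
          push_cast
          ring
        · simp [hkl, Matrix.one_apply]
      rw [hkey, ← hW]
    · rw [if_neg hc2]
      have hkey : (fun α => Matrix.of fun k l => G α (k, u.2) (l, v.2)) = 0 := by
        funext α; ext k l
        simp [hG, Matrix.one_apply, Prod.ext_iff, hc2]
      rw [hkey, hT.1.map_zero]
      simp
  have key : amp T (m' c) G b
      = (amp T (m' c) Z b)ᴴ * amp T (m' c) Z b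
        + (amp T (m' c) Fc b)ᴴ * amp T (m' c) Fc b := by
    rw [← amp_star T hT, ← amp_star T hT, ← amp_mul T hT, ← amp_mul T hT,
      ← amp_add T hT.1, hZsum]
  have hXX : (amp T (m' c) Fc b)ᴴ * amp T (m' c) Fc b
      = amp T (m' c) G b - (amp T (m' c) Z b)ᴴ * amp T (m' c) Z b := by
    rw [key]; abel
  have hpsdX : (((‖W‖ : ℝ) : ℂ) • 1
      - (amp T (m' c) Fc b)ᴴ * amp T (m' c) Fc b).PosSemidef := by
    have h1 : ((‖W‖ : ℂ) • 1 - (amp T (m' c) Fc b)ᴴ * amp T (m' c) Fc b)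
        = (((‖W‖ : ℂ) • 1 - amp T (m' c) G b)
          + (amp T (m' c) Z b)ᴴ * amp T (m' c) Z b) := by
      rw [hXX]; abel
    rw [h1]
    refine PosSemidef.add ?_ (posSemidef_conjTranspose_mul_self _)
    have h2 : (‖W‖ : ℂ) • 1 - amp T (m' c) G b
        = Matrix.of fun (u v : Fin (m b) × Fin (m' c)) =>
            if u.2 = v.2 then ((‖W‖ : ℂ) • 1 - W) u.1 v.1 else 0 := by
      rw [hampG]
      ext u v
      simp only [Matrix.sub_apply, Matrix.smul_apply, Matrix.one_apply, of_apply,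
        smul_eq_mul]
      rcases eq_or_ne u.2 v.2 with hc2 | hc2
      · simp only [hc2, if_true]
        rcases eq_or_ne u v with huv | huv
        · simp [huv, Prod.ext_iff]
        · have : ¬ u.1 = v.1 := fun h => huv (Prod.ext h hc2)
          simp [huv, this]
      · have : ¬ u = v := fun h => hc2 (by rw [h])
        simp [hc2, this]
    rw [h2]
    exact kron_one_psd _ (herm_sub_psd W hWpsd.1 ‖W‖ le_rfl)
  exact norm_le_sqrt_of_psd _ _ (norm_nonneg W) hpsdX

end Main

/-- **(P5).** If `T : F(I) → F(J)` is a *-homomorphism and `f ∈ F_{b:2}(I × J')`,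
then `(T ⊗̃ id)(f) ∈ F_{b:2}(J × J')`. -/
theorem stmt_5 {I J J' : Type*} (n : I → ℕ) (m : J → ℕ) (m' : J' → ℕ)
    (hn : ∀ γ, 0 < n γ) (hm : ∀ γ, 0 < m γ) (hm' : ∀ γ, 0 < m' γ)
    (T : FI n → FI m) (hT : IsStarHom T)
    (f : FI2 n m') (hf : Fb2 f) : Fb2 (tenR T f) :=
  aux_main T hT f hf

end DQSG
end

section
/- Let 𝔾 = (I,Δ) be a discrete quantum semigroup with n ≡ 1 (so each Δ^α_{β,γ} : ℂ → ℂ is either 0 or the identity), and suppose that for every pair (β,γ) ∈ I×I there exists α ∈ I with Δ^α_{β,γ} = id. Then such α is unique; denoting it β·γ, the binary operation (β,γ) ↦ β·γ is associative (so (I,·) is a semigroup), and the induced map satisfies [Δ(f)](β,γ) = f(β·γ) for all f ∈ F(I) and β,γ ∈ I. -/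
open scoped Matrix.Norms.L2Operator Kronecker ComplexOrder

namespace DQSG

/-- **Example 5 (converse).** A discrete quantum semigroup with `n ≡ 1` in which
every pair `(β,γ)` admits some `α` with `Δ^α_{β,γ} = id` comes from a semigroup:
such `α` is unique, the induced operation is associative, and `[Δ(f)](β,γ) = f(β·γ)`. -/
theorem stmt_12 (I : Type*) (C : Comul (fun _ : I => 1))
    (h01 : ∀ α β γ : I, C.D α β γ = e11 ∨ C.D α β γ = 0)
    (hex : ∀ β γ : I, ∃ α : I, C.D α β γ = e11) :
    (∀ β γ α α' : I, C.D α β γ = e11 → C.D α' β γ = e11 → α = α') ∧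
    ∃ op : I → I → I,
      (∀ β γ : I, C.D (op β γ) β γ = e11) ∧
      (∀ a b c : I, op (op a b) c = op a (op b c)) ∧
      ∀ (f : FI (fun _ : I => 1)) (β γ : I), C.ind f β γ = e11 (f (op β γ)) := by
  have e11_one : e11 (1 : Mat 1) = (1 : Mat2 1 1) := by
    ext u v
    have hu : u = v := Subsingleton.elim u v
    subst hu
    simp [e11, Matrix.one_apply]
  have huniq : ∀ β γ α α' : I, C.D α β γ = e11 → C.D α' β γ = e11 → α = α' := by
    intro β γ α α' h h'
    by_contra hne
    have ho := C.orth β γ α α' hne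
    rw [h, h', e11_one, one_mul] at ho
    have h2 := congrFun (congrFun ho ((0 : Fin 1), (0 : Fin 1))) ((0 : Fin 1), (0 : Fin 1))
    simp [Matrix.one_apply] at h2
  choose op hop using hex
  have hzero : ∀ lam β γ : I, lam ≠ op β γ → C.D lam β γ = 0 := by
    intro lam β γ hne
    rcases h01 lam β γ with h | h
    · exact absurd (huniq β γ lam (op β γ) h (hop β γ)) hne
    · exact h
  have key : ∀ a b c : I, op (op a b) c = op a (op b c) := by
    intro a b c
    by_contra hne
    have hc := C.coassoc (op (op a b) c) a b c 1 0 0 0 0 0 0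
    have hL : (∑ᶠ ω : I, C.D ω a b
        (Matrix.of fun k l => C.D (op (op a b) c) ω c 1 (k, 0) (l, 0)) (0, 0) (0, 0)) = 1 := by
      rw [finsum_eq_single _ (op a b)]
      · simp [hop, e11, Matrix.one_apply]
      · intro ω hω
        simp [hzero ω a b hω]
    have hR : (∑ᶠ ω : I, C.D ω b c
        (Matrix.of fun k l => C.D (op (op a b) c) a ω 1 (0, k) (0, l)) (0, 0) (0, 0)) = 0 := by
      rw [finsum_eq_single _ (op b c)]
      · simp [hop, hzero _ a (op b c) hne, e11]
      · intro ω hω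
        simp [hzero ω b c hω]
    rw [hc, hR] at hL
    exact one_ne_zero hL.symm
  refine ⟨huniq, op, hop, key, ?_⟩
  intro f β γ
  unfold Comul.ind
  rw [finsum_eq_single _ (op β γ)]
  · rw [hop]
  · intro α hα
    simp [hzero α β γ hα]

end DQSG
end

section
/- Let 𝔾 = (I,Δ) be a discrete quantum semigroup with a right invariant mean 𝔪, and let f ∈ F(𝔾) be such that g := Δ(f) − f⊗1 belongs to F_{b:1}(𝔾×𝔾) (here (f⊗1)(β,γ) = f(β)⊗1_{n(γ)}). Then F := (𝔪 ⊗̃ id)(g) ∈ F(𝔾) satisfies the noncommutative additive equation: [Δ(F)](β,γ) = F(β)⊗1_{n(γ)} + 1_{n(β)}⊗F(γ) for all β,γ ∈ I. -/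
open scoped Matrix.Norms.L2Operator Kronecker ComplexOrder

namespace DQSG

noncomputable instance (m : Type*) [Fintype m] [DecidableEq m] : CStarAlgebra (Matrix m m ℂ) := Matrix.instCStarAlgebra

/-- real-number lemma for the 2^m trick -/
lemma le_of_pow_two_pow_le {x y : ℝ} (hx : 0 ≤ x) (hy : 0 ≤ y)
    (h : ∀ m : ℕ, x ^ (2 ^ m) ≤ 2 * y ^ (2 ^ m)) : x ≤ y := by
  rcases eq_or_lt_of_le hy with hy0 | hy0
  · have h0 := h 0
    simp only [pow_one, pow_zero] at h0
    nlinarith [h 0, pow_one x ▸ (h 0)]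
  · by_contra hxy
    push_neg at hxy
    have hr : 1 < x / y := (one_lt_div hy0).mpr hxy
    obtain ⟨k, hk⟩ := pow_unbounded_of_one_lt (2 : ℝ) hr
    have h1 : (x / y) ^ k ≤ (x / y) ^ (2 ^ k) :=
      pow_le_pow_right₀ hr.le (Nat.lt_two_pow_self (n := k)).le
    have h2 : (x / y) ^ (2 ^ k) ≤ 2 := by
      rw [div_pow, div_le_iff₀ (pow_pos hy0 _)]
      simpa [mul_comm] using h (k)
    linarith

section CStar
variable {A : Type*} [NormedRing A] [StarRing A] [CStarRing A]

lemma sa_orth_norm_add_le {c d : A} (hc : IsSelfAdjoint c) (hd : IsSelfAdjoint d)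
    (hcd : c * d = 0) (hdc : d * c = 0) : ‖c + d‖ ≤ max ‖c‖ ‖d‖ := by
  have key : ∀ (x y : A), x * y = 0 → ∀ N : ℕ, 1 ≤ N → x ^ N * y = 0 := by
    intro x y hxy N hN
    obtain ⟨M, rfl⟩ := Nat.exists_eq_add_of_le hN
    rw [add_comm, pow_succ, mul_assoc, hxy, mul_zero]
  have hpow : ∀ N : ℕ, 1 ≤ N → (c + d) ^ N = c ^ N + d ^ N := by
    intro N hN
    induction N with
    | zero => omega
    | succ N ih =>
      rcases Nat.lt_or_ge 1 (N + 1) with h1 | h1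
      · have hN1 : 1 ≤ N := by omega
        rw [pow_succ, ih hN1, add_mul, mul_add, mul_add,
          key c d hcd N hN1, key d c hdc N hN1, ← pow_succ, ← pow_succ]
        abel
      · have : N = 0 := by omega
        subst this
        simp
  have hsum : ∀ m : ℕ, ‖c + d‖ ^ (2 ^ m) ≤ 2 * (max ‖c‖ ‖d‖) ^ (2 ^ m) := by
    intro m
    have hsa : IsSelfAdjoint (c + d) := hc.add hd
    have e1 : ‖(c + d) ^ 2 ^ m‖₊ = ‖c + d‖₊ ^ 2 ^ m := hsa.nnnorm_pow_two_pow m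
    have e1' : ‖c + d‖ ^ 2 ^ m = ‖(c + d) ^ 2 ^ m‖ := by
      have := congrArg (fun t : NNReal => (t : ℝ)) e1
      push_cast at this
      linarith
    have e2 : ‖c ^ 2 ^ m‖ = ‖c‖ ^ 2 ^ m := by
      have := congrArg (fun t : NNReal => (t : ℝ)) (hc.nnnorm_pow_two_pow m)
      push_cast at this
      linarith
    have e3 : ‖d ^ 2 ^ m‖ = ‖d‖ ^ 2 ^ m := by
      have := congrArg (fun t : NNReal => (t : ℝ)) (hd.nnnorm_pow_two_pow m)
      push_cast at this
      linarith
    have h2m : 1 ≤ 2 ^ m := Nat.one_le_two_pow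
    rw [e1', hpow _ h2m]
    calc ‖c ^ 2 ^ m + d ^ 2 ^ m‖ ≤ ‖c ^ 2 ^ m‖ + ‖d ^ 2 ^ m‖ := norm_add_le _ _
      _ = ‖c‖ ^ 2 ^ m + ‖d‖ ^ 2 ^ m := by rw [e2, e3]
      _ ≤ (max ‖c‖ ‖d‖) ^ 2 ^ m + (max ‖c‖ ‖d‖) ^ 2 ^ m := by
          gcongr <;> [exact le_max_left _ _; exact le_max_right _ _]
      _ = 2 * (max ‖c‖ ‖d‖) ^ 2 ^ m := by ring
  exact le_of_pow_two_pow_le (norm_nonneg _)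
    (le_max_of_le_left (norm_nonneg c)) hsum

lemma orth_norm_add_le (a b : A) (h1 : star a * b = 0) (h2 : a * star b = 0) :
    ‖a + b‖ ≤ max ‖a‖ ‖b‖ := by
  have h1' : star b * a = 0 := by
    have := congrArg star h1
    simpa [star_mul] using this
  have h2' : b * star a = 0 := by
    have := congrArg star h2
    simpa [star_mul] using this
  have hcd : (star a * a) * (star b * b) = 0 := by
    rw [mul_assoc, ← mul_assoc a, h2, zero_mul, mul_zero]
  have hdc : (star b * b) * (star a * a) = 0 := by
    rw [mul_assoc, ← mul_assoc b, h2', zero_mul, mul_zero]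
  have hmain := sa_orth_norm_add_le (IsSelfAdjoint.star_mul_self a)
    (IsSelfAdjoint.star_mul_self b) hcd hdc
  have hexp : star (a + b) * (a + b) = star a * a + star b * b := by
    rw [star_add, add_mul, mul_add, mul_add, h1, h1']
    abel
  have hC : ‖a + b‖ * ‖a + b‖ = ‖star (a + b) * (a + b)‖ :=
    (CStarRing.norm_star_mul_self).symm
  have hCa : ‖star a * a‖ = ‖a‖ * ‖a‖ := CStarRing.norm_star_mul_self
  have hCb : ‖star b * b‖ = ‖b‖ * ‖b‖ := CStarRing.norm_star_mul_self
  rw [hexp] at hC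
  rw [hCa, hCb] at hmain
  have hM : 0 ≤ max ‖a‖ ‖b‖ := le_max_of_le_left (norm_nonneg a)
  have : ‖a + b‖ * ‖a + b‖ ≤ max ‖a‖ ‖b‖ * max ‖a‖ ‖b‖ := by
    rw [hC]
    refine hmain.trans ?_
    rcases max_cases (‖a‖ * ‖a‖) (‖b‖ * ‖b‖) with ⟨h, _⟩ | ⟨h, _⟩ <;> rw [h]
    · exact mul_le_mul (le_max_left _ _) (le_max_left _ _) (norm_nonneg a) hM
    · exact mul_le_mul (le_max_right _ _) (le_max_right _ _) (norm_nonneg b) hM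
  nlinarith [norm_nonneg (a + b)]

end CStar


lemma sum_range_eq {n n' : Type*} {M : Type*} [AddCommMonoid M] [Fintype n] [Fintype n']
    (e : n' → n) (he : Function.Injective e) (Φ : n → M)
    (h0 : ∀ x, x ∉ Set.range e → Φ x = 0) :
    ∑ x, Φ x = ∑ y, Φ (e y) := by
  classical
  have himg : ∑ x ∈ Finset.univ.image e, Φ x = ∑ y, Φ (e y) :=
    Finset.sum_image (fun a _ b _ h => he h)
  rw [← himg]
  refine (Finset.sum_subset (Finset.subset_univ _) fun x _ hx => h0 x ?_).symm
  intro ⟨y, hy⟩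
  exact hx (Finset.mem_image.mpr ⟨y, Finset.mem_univ _, hy⟩)

lemma l2_opNorm_submatrix {m n m' n' : Type*} [Fintype m] [Fintype n] [Fintype m'] [Fintype n']
    [DecidableEq n] [DecidableEq n'] (X : Matrix m n ℂ) (e : m' → m) (e' : n' → n)
    (he : Function.Injective e) (he' : Function.Injective e') :
    ‖X.submatrix e e'‖ ≤ ‖X‖ := by
  classical
  rw [Matrix.l2_opNorm_def]
  refine ContinuousLinearMap.opNorm_le_bound _ (norm_nonneg X) fun v => ?_
  set v0 : n' → ℂ := (WithLp.equiv 2 (n' → ℂ)) v with hv0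
  set w0 : n → ℂ := Function.extend e' v0 0 with hw0
  set w : EuclideanSpace ℂ n := (WithLp.equiv 2 (n → ℂ)).symm w0 with hw
  have hwnorm : ‖w‖ = ‖v‖ := by
    rw [EuclideanSpace.norm_eq, EuclideanSpace.norm_eq]
    congr 1
    have : ∀ x : n, x ∉ Set.range e' → ‖w0 x‖ ^ 2 = 0 := by
      intro x hx
      have : w0 x = 0 := by
        rw [hw0, Function.extend_apply' _ _ _ (fun ⟨y, hy⟩ => hx ⟨y, hy⟩)]
        rfl
      simp [this]
    calc ∑ i : n, ‖w i‖ ^ 2 = ∑ i : n, ‖w0 i‖ ^ 2 := rfl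
      _ = ∑ y : n', ‖w0 (e' y)‖ ^ 2 := sum_range_eq e' he' (fun x => ‖w0 x‖ ^ 2) this
      _ = ∑ i : n', ‖v i‖ ^ 2 := by
          congr 1
          funext y
          rw [hw0, he'.extend_apply]
          rfl
  have hmv : ∀ a : m, (X.mulVec w0) a = ∑ l : n', X a (e' l) * v0 l := by
    intro a
    rw [Matrix.mulVec, dotProduct]
    rw [sum_range_eq e' he' (fun x => X a x * w0 x) ?_]
    · congr 1
      funext y
      rw [hw0, he'.extend_apply]
    · intro x hx
      have : w0 x = 0 := by
        rw [hw0, Function.extend_apply' _ _ _ (fun ⟨y, hy⟩ => hx ⟨y, hy⟩)]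
        rfl
      simp [this]
  have hsub : ∀ k : m', ((X.submatrix e e').mulVec v0) k = (X.mulVec w0) (e k) := by
    intro k
    rw [hmv]
    rfl
  have key : ‖(LinearEquiv.trans Matrix.toEuclideanLin
      LinearMap.toContinuousLinearMap) (X.submatrix e e') v‖ ≤ ‖X‖ * ‖w‖ := by
    have hXw : ‖(WithLp.equiv 2 (m → ℂ)).symm (X.mulVec w0)‖ ≤ ‖X‖ * ‖w‖ := by
      have := Matrix.l2_opNorm_mulVec X w
      convert this using 3
      exact rfl
    have hnorm1 : ‖(LinearEquiv.trans Matrix.toEuclideanLin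
        LinearMap.toContinuousLinearMap) (X.submatrix e e') v‖
        = Real.sqrt (∑ k : m', ‖((X.submatrix e e').mulVec v0) k‖ ^ 2) := by
      rw [show ((LinearEquiv.trans Matrix.toEuclideanLin
        LinearMap.toContinuousLinearMap) (X.submatrix e e') v : EuclideanSpace ℂ m')
        = (WithLp.equiv 2 (m' → ℂ)).symm ((X.submatrix e e').mulVec v0) from rfl]
      rw [EuclideanSpace.norm_eq]
      rfl
    have hnorm2 : ‖(WithLp.equiv 2 (m → ℂ)).symm (X.mulVec w0)‖
        = Real.sqrt (∑ a : m, ‖(X.mulVec w0) a‖ ^ 2) := by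
      rw [EuclideanSpace.norm_eq]
      rfl
    rw [hnorm1]
    refine le_trans ?_ hXw
    rw [hnorm2]
    apply Real.sqrt_le_sqrt
    calc ∑ k : m', ‖((X.submatrix e e').mulVec v0) k‖ ^ 2
        = ∑ k : m', ‖(X.mulVec w0) (e k)‖ ^ 2 := by
          congr 1; funext k; rw [hsub]
      _ ≤ ∑ a : m, ‖(X.mulVec w0) a‖ ^ 2 := by
          have himg : ∑ x ∈ Finset.univ.image e, ‖(X.mulVec w0) x‖ ^ 2
              = ∑ k : m', ‖(X.mulVec w0) (e k)‖ ^ 2 :=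
            Finset.sum_image (fun a _ b _ h => he h)
          rw [← himg]
          exact Finset.sum_le_univ_sum_of_nonneg fun x => by positivity
  rw [hwnorm] at key
  exact key


section ComulLemmas
variable {I : Type*} {n : I → ℕ}

/-- `D α β γ` as a linear map. -/
noncomputable def Comul.L (C : Comul n) (α β γ : I) : Mat (n α) →ₗ[ℂ] Mat2 (n β) (n γ) :=
  IsLinearMap.mk' _ (C.linear α β γ)

@[simp] lemma Comul.L_apply (C : Comul n) (α β γ : I) (x : Mat (n α)) :
    C.L α β γ x = C.D α β γ x := rfl

/-- `D α β γ` as a non-unital star algebra hom. -/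
noncomputable def Comul.hom (C : Comul n) (α β γ : I) :
    Mat (n α) →⋆ₙₐ[ℂ] Mat2 (n β) (n γ) where
  toFun := C.D α β γ
  map_add' := (C.L α β γ).map_add
  map_smul' := (C.L α β γ).map_smul
  map_zero' := (C.L α β γ).map_zero
  map_mul' := C.map_mul' α β γ
  map_star' := C.map_star' α β γ

lemma Comul.D_norm_le (C : Comul n) (α β γ : I) (x : Mat (n α)) :
    ‖C.D α β γ x‖ ≤ ‖x‖ :=
  NonUnitalStarAlgHom.norm_apply_le (C.hom α β γ) x

lemma Comul.D_zero (C : Comul n) (α β γ : I) : C.D α β γ 0 = 0 :=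
  (C.L α β γ).map_zero

lemma Comul.D_mul_D_eq_zero (C : Comul n) {β γ α α' : I} (hne : α ≠ α')
    (x : Mat (n α)) (y : Mat (n α')) :
    C.D α β γ x * C.D α' β γ y = 0 := by
  have h1 : C.D α β γ x = C.D α β γ x * C.D α β γ 1 := by
    rw [← C.map_mul', mul_one]
  have h2 : C.D α' β γ y = C.D α' β γ 1 * C.D α' β γ y := by
    rw [← C.map_mul', one_mul]
  rw [h1, h2, mul_assoc, ← mul_assoc (C.D α β γ 1), C.orth β γ α α' hne]
  simp

/-- Master bound: a finite orthogonal sum of contractively mapped elements. -/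
lemma Comul.sum_D_norm_le (C : Comul n) (β γ : I) (h : FI n) (K : ℝ) (hK : 0 ≤ K)
    (hh : ∀ ω, ‖h ω‖ ≤ K) (s : Finset I) :
    ‖∑ ω ∈ s, C.D ω β γ (h ω)‖ ≤ K := by
  classical
  induction s using Finset.induction_on with
  | empty => simpa using hK
  | @insert a s ha ih =>
    rw [Finset.sum_insert ha]
    set x := C.D a β γ (h a) with hx
    set y := ∑ ω ∈ s, C.D ω β γ (h ω) with hy
    have hxy : star x * y = 0 := by
      rw [hy, Finset.mul_sum]
      refine Finset.sum_eq_zero fun ω hω => ?_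
      have hne : a ≠ ω := fun hc => ha (hc ▸ hω)
      rw [hx, ← C.map_star']
      exact C.D_mul_D_eq_zero hne _ _
    have hyx : x * star y = 0 := by
      rw [hy, star_sum, Finset.mul_sum]
      refine Finset.sum_eq_zero fun ω hω => ?_
      have hne : a ≠ ω := fun hc => ha (hc ▸ hω)
      rw [hx, ← C.map_star']
      exact C.D_mul_D_eq_zero hne _ _
    refine (orth_norm_add_le x y hxy hyx).trans ?_
    have h1 : ‖x‖ ≤ K := (C.D_norm_le a β γ (h a)).trans (hh a)
    exact max_le h1 ih

lemma Comul.ind_eq_sum (C : Comul n) (h : FI n) (β γ : I) :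
    C.ind h β γ = ∑ ω ∈ (C.finite β γ).toFinset, C.D ω β γ (h ω) := by
  refine finsum_eq_sum_of_support_subset _ fun ω hω => ?_
  rw [Set.Finite.coe_toFinset]
  rw [Function.mem_support] at hω
  intro hD
  exact hω (by show C.D ω β γ (h ω) = 0; rw [hD]; rfl)

lemma Comul.ind_norm_le (C : Comul n) (h : FI n) (K : ℝ) (hK : 0 ≤ K)
    (hh : ∀ ω, ‖h ω‖ ≤ K) (β γ : I) : ‖C.ind h β γ‖ ≤ K := by
  rw [C.ind_eq_sum]
  exact C.sum_D_norm_le β γ h K hK hh _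

end ComulLemmas


section ApFLemmas
variable {I : Type*} {n : I → ℕ}

lemma mem_Fb_iff {a : FI n} : a ∈ Fb n ↔ ∃ C : ℝ, ∀ γ, ‖a γ‖ ≤ C := Iff.rfl

lemma apF_of_mem (𝔪 : Fb n →ₗ[ℂ] ℂ) {a : FI n} (ha : a ∈ Fb n) :
    apF 𝔪 a = 𝔪 ⟨a, ha⟩ := dif_pos ha

lemma apF_add (𝔪 : Fb n →ₗ[ℂ] ℂ) {a b : FI n} (ha : a ∈ Fb n) (hb : b ∈ Fb n) :
    apF 𝔪 (a + b) = apF 𝔪 a + apF 𝔪 b := by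
  rw [apF_of_mem 𝔪 ha, apF_of_mem 𝔪 hb, apF_of_mem 𝔪 (add_mem ha hb),
    show (⟨a + b, add_mem ha hb⟩ : Fb n) = ⟨a, ha⟩ + ⟨b, hb⟩ from rfl, map_add]

lemma apF_smul (𝔪 : Fb n →ₗ[ℂ] ℂ) (c : ℂ) {a : FI n} (ha : a ∈ Fb n) :
    apF 𝔪 (c • a) = c * apF 𝔪 a := by
  rw [apF_of_mem 𝔪 ha, apF_of_mem 𝔪 (Submodule.smul_mem _ c ha),
    show (⟨c • a, Submodule.smul_mem _ c ha⟩ : Fb n) = c • ⟨a, ha⟩ from rfl, map_smul,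
    smul_eq_mul]

lemma apF_sum (𝔪 : Fb n →ₗ[ℂ] ℂ) {ι : Type*} (s : Finset ι) (p : ι → FI n)
    (hp : ∀ i ∈ s, p i ∈ Fb n) :
    apF 𝔪 (∑ i ∈ s, p i) = ∑ i ∈ s, apF 𝔪 (p i) := by
  classical
  induction s using Finset.induction_on with
  | empty =>
    simp only [Finset.sum_empty]
    rw [apF_of_mem 𝔪 (zero_mem _), show (⟨(0 : FI n), zero_mem _⟩ : Fb n) = 0 from rfl,
      map_zero]
  | @insert a s ha ih =>
    rw [Finset.sum_insert ha, Finset.sum_insert ha,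
      apF_add 𝔪 (hp a (Finset.mem_insert_self a s))
        (sum_mem fun i hi => hp i (Finset.mem_insert_of_mem hi)),
      ih fun i hi => hp i (Finset.mem_insert_of_mem hi)]

end ApFLemmas

section SliceLemmas
variable {I J : Type*} {n : I → ℕ} {m : J → ℕ}

lemma norm_slice2_le (f : FI2 n m) (β : J) (i j : Fin (m β)) (α : I) :
    ‖slice2 f β i j α‖ ≤ ‖f α β‖ := by
  have : slice2 f β i j α = (f α β).submatrix (fun k => (k, i)) (fun l => (l, j)) := rfl
  rw [this]
  exact l2_opNorm_submatrix _ _ _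
    (fun a b h => congrArg Prod.fst h) (fun a b h => congrArg Prod.fst h)

lemma slice2_mem_Fb_s14 {g : FI2 n n} (hg : Fb1 g) (δ : I) (i j : Fin (n δ)) :
    slice2 g δ i j ∈ Fb n := by
  obtain ⟨c, hc⟩ := hg δ
  exact ⟨c, fun α => (norm_slice2_le g δ i j α).trans (hc α)⟩

lemma lin_entry {k : Type*} [Fintype k] [DecidableEq k] {V : Type*} [AddCommMonoid V]
    [Module ℂ V] (L : Matrix k k ℂ →ₗ[ℂ] V) (x : Matrix k k ℂ) :
    L x = ∑ i, ∑ j, x i j • L (Matrix.single i j 1) := by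
  conv_lhs => rw [Matrix.matrix_eq_sum_single x]
  rw [map_sum]
  refine Finset.sum_congr rfl fun i _ => ?_
  rw [map_sum]
  refine Finset.sum_congr rfl fun j _ => ?_
  rw [← map_smul, Matrix.smul_single, smul_eq_mul, mul_one]

lemma lin_entry_apply {k p : Type*} [Fintype k] [DecidableEq k]
    (L : Matrix k k ℂ →ₗ[ℂ] Matrix p p ℂ) (x : Matrix k k ℂ) (u v : p) :
    L x u v = ∑ i, ∑ j, x i j * L (Matrix.single i j 1) u v := by
  conv_lhs => rw [lin_entry L x]
  rw [Matrix.sum_apply]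
  refine Finset.sum_congr rfl fun i _ => ?_
  rw [Matrix.sum_apply]
  refine Finset.sum_congr rfl fun j _ => ?_
  rw [Matrix.smul_apply, smul_eq_mul]

end SliceLemmas


section MoreHelpers
variable {I : Type*} {n : I → ℕ}

lemma Comul.D_apply_zero_fun {C : Comul n} {α β γ : I} (h : C.D α β γ = 0)
    (x : Mat (n α)) : C.D α β γ x = 0 := by rw [h]; rfl

lemma Comul.supp_subset (C : Comul n) (β γ : I) (M : ∀ α : I, Mat (n α))
    (u v : Fin (n β) × Fin (n γ)) :
    Function.support (fun α => C.D α β γ (M α) u v) ⊆ ↑(C.finite β γ).toFinset := by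
  intro α hα
  rw [Set.Finite.coe_toFinset]
  exact fun hD => hα (by show C.D α β γ (M α) u v = 0; rw [Comul.D_apply_zero_fun hD]; rfl)

end MoreHelpers

/-- The function `F = (𝔪 ⊗̃ id)(Δ(f) - f ⊗ 1)` satisfies the noncommutative
additive functional equation, provided `Δ(f) - f ⊗ 1 ∈ F_{b:1}(𝔾 × 𝔾)`. -/
theorem stmt_14 {I : Type*} (n : I → ℕ) (hn : ∀ γ, 0 < n γ) (C : Comul n)
    (𝔪 : Fb n →ₗ[ℂ] ℂ) (h𝔪 : IsRIMean C 𝔪)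
    (f : FI n) (g : FI2 n n)
    (hgdef : ∀ β γ : I, g β γ = C.ind f β γ - f β ⊗ₖ (1 : Mat (n γ)))
    (hg : Fb1 g) :
    ∀ β γ : I, C.ind (fTenR 𝔪 g) β γ
      = fTenR 𝔪 g β ⊗ₖ (1 : Mat (n γ)) + (1 : Mat (n β)) ⊗ₖ fTenR 𝔪 g γ := by
  classical
  intro β γ
  by_cases hf : f ∈ Fb n
  · -- Case 1 : `f` itself is bounded; then `F = 0` and both sides vanish.
    have hF0 : fTenR 𝔪 g = 0 := by
      funext δ
      ext i j
      simp only [Pi.zero_apply, Matrix.zero_apply]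
      show apF 𝔪 (slice2 g δ i j) = 0
      have hsplit : slice2 (C.ind f) δ i j
          = slice2 g δ i j + ((1 : Mat (n δ)) i j) • f := by
        funext α
        ext k l
        show C.ind f α δ (k, i) (l, j)
          = g α δ (k, i) (l, j) + ((1 : Mat (n δ)) i j) • f α k l
        rw [hgdef α δ]
        simp only [Matrix.sub_apply, Matrix.kroneckerMap_apply, smul_eq_mul,
          Pi.smul_apply, Matrix.smul_apply]
        ring
      have hinv := congrFun (h𝔪.2 f hf) δ
      have h1 : apF 𝔪 (slice2 (C.ind f) δ i j) = apF 𝔪 f * (1 : Mat (n δ)) i j := by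
        have h2 := congrFun (congrFun hinv i) j
        simpa [fTenR, Matrix.smul_apply, smul_eq_mul] using h2
      have h3 : apF 𝔪 (slice2 (C.ind f) δ i j)
          = apF 𝔪 (slice2 g δ i j) + (1 : Mat (n δ)) i j * apF 𝔪 f := by
        rw [hsplit, apF_add 𝔪 (slice2_mem_Fb_s14 hg δ i j) (Submodule.smul_mem _ _ hf),
          apF_smul 𝔪 _ hf]
      rw [h1] at h3
      linear_combination -h3
    rw [hF0]
    have hind0 : C.ind (0 : FI n) β γ = 0 := by
      show (∑ᶠ α, C.D α β γ ((0 : FI n) α)) = 0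
      have : (fun α => C.D α β γ ((0 : FI n) α)) = fun _ => 0 := by
        funext α
        exact C.D_zero α β γ
      rw [this, finsum_zero]
    rw [hind0]
    ext ⟨a, b⟩ ⟨c, d⟩
    simp [Matrix.kroneckerMap_apply]
  · -- Case 2 : the main computation.
    set F := fTenR 𝔪 g with hF
    set S : Finset I := (C.finite β γ).toFinset with hS
    ext ⟨q, r⟩ ⟨q', r'⟩
    set u : Fin (n β) × Fin (n γ) := (q, r) with hu
    set v : Fin (n β) × Fin (n γ) := (q', r') with hv
    set δr : ℂ := (1 : Mat (n γ)) r r' with hδr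
    set δq : ℂ := (1 : Mat (n β)) q q' with hδq
    set slγ : FI n := slice2 g γ r r' with hslγ
    set slβ : FI n := slice2 g β q q' with hslβ
    set cst : ℂ := ∑ α ∈ S, C.D α β γ (1 : Mat (n α)) u v with hcst
    set t : ℂ := δr * δq - cst with ht
    set P : I → FI n := fun α => ∑ i : Fin (n α), ∑ j : Fin (n α),
      (C.D α β γ (Matrix.single i j 1) u v) • slice2 g α i j with hP
    have hPmem : ∀ α, P α ∈ Fb n := fun α =>
      sum_mem fun i _ => sum_mem fun j _ =>
        Submodule.smul_mem _ _ (slice2_mem_Fb_s14 hg α i j)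
    set Q : FI n := ∑ α ∈ S, P α with hQ
    have hQmem : Q ∈ Fb n := sum_mem fun α _ => hPmem α
    set Ag : FI n := fun α' => Matrix.of fun k l => C.ind slγ α' β (k, q) (l, q') with hAg
    -- LHS = apF 𝔪 Q
    have hLHS : C.ind F β γ u v = apF 𝔪 Q := by
      have hB : ∀ α, C.D α β γ (F α) u v = apF 𝔪 (P α) := by
        intro α
        have h1 : C.D α β γ (F α) u v
            = ∑ i : Fin (n α), ∑ j : Fin (n α),
              F α i j * C.D α β γ (Matrix.single i j 1) u v :=
          lin_entry_apply (C.L α β γ) (F α) u v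
        have h2 : apF 𝔪 (P α)
            = ∑ i : Fin (n α), ∑ j : Fin (n α),
              C.D α β γ (Matrix.single i j 1) u v * apF 𝔪 (slice2 g α i j) := by
          rw [hP]
          rw [apF_sum 𝔪 _ _ (fun i _ => sum_mem fun j _ =>
            Submodule.smul_mem _ _ (slice2_mem_Fb_s14 hg α i j))]
          refine Finset.sum_congr rfl fun i _ => ?_
          rw [apF_sum 𝔪 _ _ (fun j _ => Submodule.smul_mem _ _ (slice2_mem_Fb_s14 hg α i j))]
          refine Finset.sum_congr rfl fun j _ => ?_
          rw [apF_smul 𝔪 _ (slice2_mem_Fb_s14 hg α i j)]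
        rw [h1, h2]
        refine Finset.sum_congr rfl fun i _ => Finset.sum_congr rfl fun j _ => ?_
        rw [mul_comm]
        rfl
      rw [C.ind_eq_sum F β γ, Matrix.sum_apply, hQ,
        apF_sum 𝔪 _ _ (fun α _ => hPmem α)]
      exact Finset.sum_congr rfl fun α _ => hB α
    -- the structural identity
    have hkey : Q = Ag + δr • slβ + t • f := by
      funext α'
      ext k l
      -- abbreviations (plain defs, no `set` to keep terms explicit)
      have hXzero : ∀ lam α : I, C.D lam α' α = 0 →
          C.D α β γ (Matrix.of fun i j => C.D lam α' α (f lam) (k, i) (l, j)) u v = 0 := by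
        intro lam α hD
        have h1 : (Matrix.of fun i j => C.D lam α' α (f lam) (k, i) (l, j))
            = (0 : Mat (n α)) := by
          ext i j
          rw [Matrix.of_apply, Comul.D_apply_zero_fun hD]
          rfl
        rw [h1, C.D_zero]
        rfl
      -- step 1 : Q α' k l as a sum of D-values of slices of g
      have step1 : Q α' k l = ∑ α ∈ S,
          C.D α β γ (Matrix.of fun i j => g α' α (k, i) (l, j)) u v := by
        rw [hQ, Finset.sum_apply, Matrix.sum_apply]
        refine Finset.sum_congr rfl fun α _ => ?_
        have h1 : P α α' k l = ∑ i : Fin (n α), ∑ j : Fin (n α),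
            (Matrix.of fun i j => g α' α (k, i) (l, j)) i j
              * C.D α β γ (Matrix.single i j 1) u v := by
          show (∑ i : Fin (n α), ∑ j : Fin (n α),
            C.D α β γ (Matrix.single i j 1) u v • slice2 g α i j) α' k l = _
          rw [Finset.sum_apply, Matrix.sum_apply]
          refine Finset.sum_congr rfl fun i _ => ?_
          rw [Finset.sum_apply, Matrix.sum_apply]
          refine Finset.sum_congr rfl fun j _ => ?_
          rw [Pi.smul_apply, Matrix.smul_apply, smul_eq_mul, mul_comm]
          rfl
        rw [h1]
        exact (lin_entry_apply (C.L α β γ) _ u v).symm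
      -- step 2/3 : split off the `f ⊗ 1` part
      have step3 : Q α' k l = (∑ α ∈ S,
          C.D α β γ (Matrix.of fun i j => C.ind f α' α (k, i) (l, j)) u v)
            - f α' k l * cst := by
        rw [step1, hcst, Finset.mul_sum, ← Finset.sum_sub_distrib]
        refine Finset.sum_congr rfl fun α _ => ?_
        have hMs : (Matrix.of fun i j => g α' α (k, i) (l, j))
            = (Matrix.of fun i j => C.ind f α' α (k, i) (l, j))
              - f α' k l • (1 : Mat (n α)) := by
          ext i j
          rw [Matrix.sub_apply, Matrix.of_apply, Matrix.of_apply, hgdef α' α]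
          rw [Matrix.sub_apply, Matrix.kroneckerMap_apply, Matrix.smul_apply, smul_eq_mul]
        rw [hMs]
        have hsub : C.D α β γ ((Matrix.of fun i j => C.ind f α' α (k, i) (l, j))
            - f α' k l • (1 : Mat (n α)))
            = C.D α β γ (Matrix.of fun i j => C.ind f α' α (k, i) (l, j))
              - f α' k l • C.D α β γ (1 : Mat (n α)) := by
          have h1 := map_sub (C.L α β γ)
            (Matrix.of fun i j => C.ind f α' α (k, i) (l, j))
            (f α' k l • (1 : Mat (n α)))
          have h2 := map_smul (C.L α β γ) (f α' k l) (1 : Mat (n α))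
          rw [h2] at h1
          exact h1
        rw [hsub, Matrix.sub_apply, Matrix.smul_apply, smul_eq_mul]
      -- the double-sum kernels
      -- X lam α  (right-hand side of coassociativity)
      -- Y lam ω  (left-hand side of coassociativity)
      have hcoas : ∀ lam : I,
          (∑ α ∈ S, C.D α β γ
            (Matrix.of fun i j => C.D lam α' α (f lam) (k, i) (l, j)) u v)
          = ∑ ω ∈ (C.finite α' β).toFinset, C.D ω α' β
            (Matrix.of fun a b => C.D lam ω γ (f lam) (a, r) (b, r')) (k, q) (l, q') := by
        intro lam
        have h1 := finsum_eq_sum_of_support_subset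
          (fun α => C.D α β γ
            (Matrix.of fun i j => C.D lam α' α (f lam) (k, i) (l, j)) u v)
          (C.supp_subset β γ _ u v)
        have h2 := finsum_eq_sum_of_support_subset
          (fun ω => C.D ω α' β
            (Matrix.of fun a b => C.D lam ω γ (f lam) (a, r) (b, r')) (k, q) (l, q'))
          (C.supp_subset α' β _ (k, q) (l, q'))
        have coas := C.coassoc lam α' β γ (f lam) k l q q' r r'
        rw [← hu, ← hv] at coas
        rw [hS, ← h1, ← h2, ← coas]
      -- step 4-8 : coassociativity and sum manipulations
      have step4 : ∀ α ∈ S,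
          C.D α β γ (Matrix.of fun i j => C.ind f α' α (k, i) (l, j)) u v
          = ∑ lam ∈ S.biUnion (fun α => (C.finite α' α).toFinset),
              C.D α β γ (Matrix.of fun i j => C.D lam α' α (f lam) (k, i) (l, j)) u v := by
        intro α hα
        have hMF : (Matrix.of fun i j => C.ind f α' α (k, i) (l, j))
            = ∑ lam ∈ (C.finite α' α).toFinset,
                Matrix.of fun i j => C.D lam α' α (f lam) (k, i) (l, j) := by
          ext i j
          rw [Matrix.of_apply, C.ind_eq_sum f α' α, Matrix.sum_apply, Matrix.sum_apply]
          rfl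
        have hms : C.D α β γ (∑ lam ∈ (C.finite α' α).toFinset,
            Matrix.of fun i j => C.D lam α' α (f lam) (k, i) (l, j))
            = ∑ lam ∈ (C.finite α' α).toFinset,
              C.D α β γ (Matrix.of fun i j => C.D lam α' α (f lam) (k, i) (l, j)) :=
          map_sum (C.L α β γ) _ _
        rw [hMF, hms, Matrix.sum_apply]
        refine Finset.sum_subset (fun lam hlam => Finset.mem_biUnion.mpr ⟨α, hα, hlam⟩)
          (fun lam _ hlam => ?_)
        have hD : C.D lam α' α = 0 := by
          by_contra hc
          exact hlam ((C.finite α' α).mem_toFinset.mpr hc)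
        exact hXzero lam α hD
      have step8 : Q α' k l = (∑ ω ∈ (C.finite α' β).toFinset,
          ∑ lam ∈ (S.biUnion fun α => (C.finite α' α).toFinset)
              ∪ ((C.finite α' β).toFinset).biUnion (fun ω => (C.finite ω γ).toFinset),
            C.D ω α' β (Matrix.of fun a b => C.D lam ω γ (f lam) (a, r) (b, r'))
              (k, q) (l, q')) - f α' k l * cst := by
        rw [step3]
        congr 1
        calc ∑ α ∈ S, C.D α β γ (Matrix.of fun i j => C.ind f α' α (k, i) (l, j)) u v
            = ∑ α ∈ S, ∑ lam ∈ S.biUnion (fun α => (C.finite α' α).toFinset),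
                C.D α β γ (Matrix.of fun i j => C.D lam α' α (f lam) (k, i) (l, j)) u v :=
              Finset.sum_congr rfl step4
          _ = ∑ lam ∈ S.biUnion (fun α => (C.finite α' α).toFinset), ∑ α ∈ S,
                C.D α β γ (Matrix.of fun i j => C.D lam α' α (f lam) (k, i) (l, j)) u v :=
              Finset.sum_comm
          _ = ∑ lam ∈ S.biUnion (fun α => (C.finite α' α).toFinset),
                ∑ ω ∈ (C.finite α' β).toFinset, C.D ω α' β
                  (Matrix.of fun a b => C.D lam ω γ (f lam) (a, r) (b, r')) (k, q) (l, q') :=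
              Finset.sum_congr rfl (fun lam _ => hcoas lam)
          _ = ∑ lam ∈ (S.biUnion fun α => (C.finite α' α).toFinset)
                ∪ ((C.finite α' β).toFinset).biUnion (fun ω => (C.finite ω γ).toFinset),
                ∑ ω ∈ (C.finite α' β).toFinset, C.D ω α' β
                  (Matrix.of fun a b => C.D lam ω γ (f lam) (a, r) (b, r')) (k, q) (l, q') := by
              refine Finset.sum_subset Finset.subset_union_left (fun lam _ hlam => ?_)
              rw [← hcoas lam]
              refine Finset.sum_eq_zero fun α hα => ?_
              have hD : C.D lam α' α = 0 := by
                by_contra hc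
                exact hlam
                  (Finset.mem_biUnion.mpr ⟨α, hα, (C.finite α' α).mem_toFinset.mpr hc⟩)
              exact hXzero lam α hD
          _ = ∑ ω ∈ (C.finite α' β).toFinset,
                ∑ lam ∈ (S.biUnion fun α => (C.finite α' α).toFinset)
                  ∪ ((C.finite α' β).toFinset).biUnion (fun ω => (C.finite ω γ).toFinset),
                C.D ω α' β (Matrix.of fun a b => C.D lam ω γ (f lam) (a, r) (b, r'))
                  (k, q) (l, q') := Finset.sum_comm
      -- step 9-11 : recombine the inner sum into Δ applied to slices
      have step9 : ∀ ω ∈ (C.finite α' β).toFinset,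
          (∑ lam ∈ (S.biUnion fun α => (C.finite α' α).toFinset)
              ∪ ((C.finite α' β).toFinset).biUnion (fun ω => (C.finite ω γ).toFinset),
            C.D ω α' β (Matrix.of fun a b => C.D lam ω γ (f lam) (a, r) (b, r'))
              (k, q) (l, q'))
          = C.D ω α' β (slγ ω) (k, q) (l, q')
            + δr * C.D ω α' β (f ω) (k, q) (l, q') := by
        intro ω hω
        have h9a : (∑ lam ∈ (S.biUnion fun α => (C.finite α' α).toFinset)
              ∪ ((C.finite α' β).toFinset).biUnion (fun ω => (C.finite ω γ).toFinset),
            Matrix.of fun a b => C.D lam ω γ (f lam) (a, r) (b, r'))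
            = Matrix.of fun a b => C.ind f ω γ (a, r) (b, r') := by
          ext a b
          rw [Matrix.sum_apply, Matrix.of_apply, C.ind_eq_sum f ω γ, Matrix.sum_apply]
          refine (Finset.sum_subset (fun lam hlam => Finset.mem_union_right _
            (Finset.mem_biUnion.mpr ⟨ω, hω, hlam⟩)) (fun lam _ hlam => ?_)).symm
          have hD : C.D lam ω γ = 0 := by
            by_contra hc
            exact hlam ((C.finite ω γ).mem_toFinset.mpr hc)
          rw [Matrix.of_apply, Comul.D_apply_zero_fun hD]
          rfl
        have h9c : (Matrix.of fun a b => C.ind f ω γ (a, r) (b, r'))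
            = slγ ω + δr • f ω := by
          ext a b
          have hi : C.ind f ω γ = g ω γ + f ω ⊗ₖ (1 : Mat (n γ)) := by
            rw [hgdef ω γ]
            abel
          have h2 : slγ ω a b = g ω γ (a, r) (b, r') := rfl
          simp only [Matrix.of_apply, hi, Matrix.add_apply, Matrix.smul_apply,
            Matrix.kroneckerMap_apply, smul_eq_mul, h2, hδr]
          ring
        have hsum : C.D ω α' β (∑ lam ∈ (S.biUnion fun α => (C.finite α' α).toFinset)
              ∪ ((C.finite α' β).toFinset).biUnion (fun ω => (C.finite ω γ).toFinset),
            Matrix.of fun a b => C.D lam ω γ (f lam) (a, r) (b, r'))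
            = ∑ lam ∈ (S.biUnion fun α => (C.finite α' α).toFinset)
              ∪ ((C.finite α' β).toFinset).biUnion (fun ω => (C.finite ω γ).toFinset),
              C.D ω α' β (Matrix.of fun a b => C.D lam ω γ (f lam) (a, r) (b, r')) :=
          map_sum (C.L ω α' β) _ _
        have hadd2 : C.D ω α' β (slγ ω + δr • f ω)
            = C.D ω α' β (slγ ω) + δr • C.D ω α' β (f ω) := by
          have h1 := map_add (C.L ω α' β) (slγ ω) (δr • f ω)
          have h2 := map_smul (C.L ω α' β) δr (f ω)
          rw [h2] at h1
          exact h1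
        rw [← Matrix.sum_apply, ← hsum, h9a, h9c, hadd2, Matrix.add_apply,
          Matrix.smul_apply, smul_eq_mul]
      -- assemble everything
      have step12 : Q α' k l
          = C.ind slγ α' β (k, q) (l, q')
            + δr * C.ind f α' β (k, q) (l, q') - f α' k l * cst := by
        rw [step8, Finset.sum_congr rfl step9, Finset.sum_add_distrib,
          ← Finset.mul_sum]
        rw [C.ind_eq_sum slγ α' β, C.ind_eq_sum f α' β, Matrix.sum_apply,
          Matrix.sum_apply]
      have hif : C.ind f α' β (k, q) (l, q')
          = g α' β (k, q) (l, q') + f α' k l * δq := by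
        have h1 : C.ind f α' β = g α' β + f α' ⊗ₖ (1 : Mat (n β)) := by
          rw [hgdef α' β]
          abel
        rw [h1, Matrix.add_apply, Matrix.kroneckerMap_apply, hδq]
      rw [step12, hif]
      have hAg' : Ag α' k l = C.ind slγ α' β (k, q) (l, q') := rfl
      have hslβ' : slβ α' k l = g α' β (k, q) (l, q') := rfl
      show C.ind slγ α' β (k, q) (l, q')
          + δr * (g α' β (k, q) (l, q') + f α' k l * δq) - f α' k l * cst
        = Ag α' k l + δr * slβ α' k l + t * f α' k l
      rw [hAg', hslβ', ht]
      ring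
    -- Ag is bounded
    have hAgmem : Ag ∈ Fb n := by
      obtain ⟨Cg, hCg⟩ := hg γ
      refine ⟨max Cg 0, fun α' => ?_⟩
      have h1 : Ag α' = (C.ind slγ α' β).submatrix
          (fun k => (k, q)) (fun l => (l, q')) := rfl
      rw [h1]
      refine (l2_opNorm_submatrix _ _ _
        (fun a b h => congrArg Prod.fst h) (fun a b h => congrArg Prod.fst h)).trans ?_
      refine C.ind_norm_le slγ (max Cg 0) (le_max_right _ _) (fun ω => ?_) α' β
      exact (norm_slice2_le g γ r r' ω).trans ((hCg ω).trans (le_max_left _ _))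
    -- t = 0
    have ht0 : t = 0 := by
      by_contra htne
      refine hf ?_
      have htf : t • f ∈ Fb n := by
        have h1 : t • f = Q - Ag - δr • slβ := by rw [hkey]; abel
        rw [h1]
        exact sub_mem (sub_mem hQmem hAgmem)
          (Submodule.smul_mem _ _ (slice2_mem_Fb_s14 hg β q q'))
      have h2 : f = t⁻¹ • (t • f) := by
        rw [smul_smul, inv_mul_cancel₀ htne, one_smul]
      rw [h2]
      exact Submodule.smul_mem _ _ htf
    -- invariance applied to slγ
    have hinvγ : apF 𝔪 Ag = apF 𝔪 slγ * δq := by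
      have hinv := congrFun (h𝔪.2 slγ (slice2_mem_Fb_s14 hg γ r r')) β
      have h2 := congrFun (congrFun hinv q) q'
      have h3 : fTenR 𝔪 (C.ind slγ) β q q' = apF 𝔪 Ag := rfl
      rw [h3] at h2
      simpa [Matrix.smul_apply, smul_eq_mul] using h2
    -- conclude
    have hQval : apF 𝔪 Q = apF 𝔪 Ag + δr * apF 𝔪 slβ := by
      have h1 : Q = Ag + δr • slβ := by
        rw [hkey, ht0, zero_smul, add_zero]
      rw [h1, apF_add 𝔪 hAgmem (Submodule.smul_mem _ _ (slice2_mem_Fb_s14 hg β q q')),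
        apF_smul 𝔪 _ (slice2_mem_Fb_s14 hg β q q')]
    have hRHS : (F β ⊗ₖ (1 : Mat (n γ)) + (1 : Mat (n β)) ⊗ₖ F γ) u v
        = apF 𝔪 slβ * δr + δq * apF 𝔪 slγ := by
      have h1 : F β q q' = apF 𝔪 slβ := rfl
      have h2 : F γ r r' = apF 𝔪 slγ := rfl
      show (F β ⊗ₖ (1 : Mat (n γ))) u v + ((1 : Mat (n β)) ⊗ₖ F γ) u v = _
      rw [Matrix.kroneckerMap_apply, Matrix.kroneckerMap_apply]
      rw [hu, hv]
      show F β q q' * (1 : Mat (n γ)) r r' + (1 : Mat (n β)) q q' * F γ r r' = _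
      rw [h1, h2]
    show C.ind F β γ u v = _
    rw [hLHS, hQval, hinvγ, hRHS]
    ring

end DQSG
end
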